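/- Let Q = (a_{ij}) be a HKZ-reduced positive definite quadratic form in n variables over a totally real number field K, with outer coefficients h₁,…,hₙ. Then there exist constants C₁,…,Cₙ (C_j depending only on j and K) and δ = C₁⋯Cₙ such that for every real embedding ν: h_j^(ν) ≤ a_{jj}^(ν) ≤ C_j·h_j^(ν) for each j, and det(Q)^(ν) ≤ a_{11}^(ν)⋯a_{nn}^(ν) ≤ δ·det(Q)^(ν). One may take C₁ = 1 and C_j = 1 + β²λ²·ᾱ(j−1)^{1/d}·(j−1). -/

import Mathlib

open NumberField Module

/-- Norm as product over real embeddings for a totally real field. -/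
lemma norm_eq_prod_real_embeddings
    (K : Type*) [Field K] [NumberField K]
    (htr : Fintype.card (K →+* ℝ) = finrank ℚ K) (x : K) :
    ((Algebra.norm ℚ x : ℚ) : ℝ) = ∏ ν : K →+* ℝ, ν x := by
  -- the map (K →+* ℝ) → (K →+* ℂ) is a bijection
  have hinj : Function.Injective
      (fun ν : K →+* ℝ => (Complex.ofRealHom.comp ν : K →+* ℂ)) := by
    intro ν μ hh
    ext a
    have := congrArg (fun f : K →+* ℂ => f a) hh
    simpa using Complex.ofReal_injective (by simpa using this)
  have hcard : Fintype.card (K →+* ℝ) = Fintype.card (K →+* ℂ) := by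
    rw [htr, NumberField.Embeddings.card K ℂ]
  have hbij : Function.Bijective
      (fun ν : K →+* ℝ => (Complex.ofRealHom.comp ν : K →+* ℂ)) :=
    (Fintype.bijective_iff_injective_and_card _).2 ⟨hinj, hcard⟩
  have hC : ((Algebra.norm ℚ x : ℚ) : ℂ) = ∏ σ : K →+* ℂ, σ x := by
    have := Algebra.norm_eq_prod_embeddings (K := ℚ) (E := ℂ) x
    rw [show (algebraMap ℚ ℂ) (Algebra.norm ℚ x) = ((Algebra.norm ℚ x : ℚ) : ℂ) from rfl] at this
    rw [this]
    exact (Fintype.prod_equiv (RingHom.equivRatAlgHom K ℂ) (fun σ : K →+* ℂ => σ x)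
      (fun φ : K →ₐ[ℚ] ℂ => φ x) (fun σ => rfl)).symm
  have : ((Algebra.norm ℚ x : ℚ) : ℂ) = ((∏ ν : K →+* ℝ, ν x : ℝ) : ℂ) := by
    rw [hC, ← Fintype.prod_bijective _ hbij (fun ν : K →+* ℝ => ((ν x : ℝ) : ℂ))
      (fun σ : K →+* ℂ => σ x) (fun ν => rfl)]
    push_cast
    rfl
  exact_mod_cast this

/-- For a HKZ-reduced positive definite quadratic form Q = (a_{ij}) over a totally real number
field K, with outer coefficients h_j and inner coefficients u_{ij}, the diagonal entries
a_{jj} = h_j + Σ_{i<j} h_i u_{ij}² satisfy h_j^(ν) ≤ a_{jj}^(ν) ≤ C_j·h_j^(ν) with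
C_j = 1 + β²λ²ᾱ(j−1)^{1/d}(j−1) (C₁ = 1), and
det(Q)^(ν) ≤ a_{11}^(ν)⋯a_{nn}^(ν) ≤ δ·det(Q)^(ν) with δ = C₁⋯Cₙ. -/
theorem hkz_diagonal_bounds
    (K : Type*) [Field K] [NumberField K]
    (htr : Fintype.card (K →+* ℝ) = finrank ℚ K)
    (n : ℕ) (beta lam : ℝ) (hbeta : 0 < beta) (hlam : 1 ≤ lam)
    (alpha : ℕ → ℝ) (halpha1 : ∀ m, 1 ≤ alpha m) (halphamono : Monotone alpha)
    (h : Fin n → K) (hpos : ∀ i, ∀ ν : K →+* ℝ, 0 < ν (h i))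
    (u : Fin n → Fin n → K)
    (hwr1 : ∀ i j : Fin n, i < j →
      (Algebra.norm ℚ (h i) : ℝ) ≤ alpha ((j : ℕ) - (i : ℕ)) * (Algebra.norm ℚ (h j) : ℝ))
    (hwr2 : ∀ (i : Fin n) (ν μ : K →+* ℝ), ν (h i) ≤ lam * μ (h i))
    (hinner : ∀ i j : Fin n, i < j → ∀ ν : K →+* ℝ, |ν (u i j)| ≤ beta) :
    (∀ (j : Fin n) (ν : K →+* ℝ),
      ν (h j) ≤ ν (h j + ∑ i ∈ Finset.Iio j, h i * u i j ^ 2) ∧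
      ν (h j + ∑ i ∈ Finset.Iio j, h i * u i j ^ 2) ≤
        (1 + beta ^ 2 * lam ^ 2 * alpha (j : ℕ) ^ ((1 : ℝ) / (finrank ℚ K : ℝ)) * (j : ℕ)) *
          ν (h j)) ∧
    (∀ ν : K →+* ℝ,
      ν (∏ i, h i) ≤ ∏ j : Fin n, ν (h j + ∑ i ∈ Finset.Iio j, h i * u i j ^ 2) ∧
      (∏ j : Fin n, ν (h j + ∑ i ∈ Finset.Iio j, h i * u i j ^ 2)) ≤
        (∏ j : Fin n,
          (1 + beta ^ 2 * lam ^ 2 * alpha (j : ℕ) ^ ((1 : ℝ) / (finrank ℚ K : ℝ)) * (j : ℕ))) *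
          ν (∏ i, h i)) := by
  set d := finrank ℚ K with hd
  have hd1 : 0 < d := Module.finrank_pos
  have hdR : (0:ℝ) < (d:ℝ) := by exact_mod_cast hd1
  have hlam0 : (0:ℝ) < lam := lt_of_lt_of_le one_pos hlam
  -- key embedding comparison
  have key : ∀ i j : Fin n, i < j → ∀ ν : K →+* ℝ,
      ν (h i) ≤ lam ^ 2 * alpha (j : ℕ) ^ ((1:ℝ)/(d:ℝ)) * ν (h j) := by
    intro i j hij ν
    have hNi : ((Algebra.norm ℚ (h i) : ℚ) : ℝ) = ∏ μ : K →+* ℝ, μ (h i) :=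
      norm_eq_prod_real_embeddings K htr (h i)
    have hNj : ((Algebra.norm ℚ (h j) : ℚ) : ℝ) = ∏ μ : K →+* ℝ, μ (h j) :=
      norm_eq_prod_real_embeddings K htr (h j)
    have hα := halpha1 ((j:ℕ) - (i:ℕ))
    have hα0 : (0:ℝ) ≤ alpha ((j:ℕ) - (i:ℕ)) := le_trans zero_le_one hα
    -- ν (h i) ^ d ≤ lam ^ d * N(h i)
    have h1 : ν (h i) ^ d ≤ lam ^ d * ((Algebra.norm ℚ (h i) : ℚ) : ℝ) := by
      rw [hNi]
      calc ν (h i) ^ d = ∏ _μ : K →+* ℝ, ν (h i) := by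
            rw [Finset.prod_const, Finset.card_univ, htr]
        _ ≤ ∏ μ : K →+* ℝ, lam * μ (h i) := by
            apply Finset.prod_le_prod (fun μ _ => (hpos i ν).le) (fun μ _ => hwr2 i ν μ)
        _ = lam ^ d * ∏ μ : K →+* ℝ, μ (h i) := by
            rw [Finset.prod_mul_distrib, Finset.prod_const, Finset.card_univ, htr]
    -- N(h j) ≤ lam ^ d * ν (h j) ^ d
    have h2 : ((Algebra.norm ℚ (h j) : ℚ) : ℝ) ≤ lam ^ d * ν (h j) ^ d := by
      rw [hNj]
      calc (∏ μ : K →+* ℝ, μ (h j)) ≤ ∏ μ : K →+* ℝ, lam * ν (h j) := by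
            apply Finset.prod_le_prod (fun μ _ => (hpos j μ).le) (fun μ _ => hwr2 j μ ν)
        _ = lam ^ d * ν (h j) ^ d := by
            rw [Finset.prod_const, Finset.card_univ, htr, mul_pow]
    have hmono : alpha ((j:ℕ) - (i:ℕ)) ≤ alpha (j:ℕ) :=
      halphamono (Nat.sub_le _ _)
    have hchain : ν (h i) ^ d ≤ (lam ^ 2 * alpha (j:ℕ) ^ ((1:ℝ)/(d:ℝ)) * ν (h j)) ^ d := by
      have hrz : (alpha (j:ℕ) ^ ((1:ℝ)/(d:ℝ))) ^ d = alpha (j:ℕ) := by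
        rw [← Real.rpow_natCast (alpha (j:ℕ) ^ ((1:ℝ)/(d:ℝ))) d,
          ← Real.rpow_mul (le_trans zero_le_one (halpha1 _)), one_div,
          inv_mul_cancel₀ (ne_of_gt hdR), Real.rpow_one]
      have := hwr1 i j hij
      calc ν (h i) ^ d ≤ lam ^ d * ((Algebra.norm ℚ (h i) : ℚ) : ℝ) := h1
        _ ≤ lam ^ d * (alpha ((j:ℕ)-(i:ℕ)) * ((Algebra.norm ℚ (h j) : ℚ) : ℝ)) := by
            apply mul_le_mul_of_nonneg_left _ (pow_nonneg hlam0.le d)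
            exact_mod_cast this
        _ ≤ lam ^ d * (alpha ((j:ℕ)-(i:ℕ)) * (lam ^ d * ν (h j) ^ d)) := by
            apply mul_le_mul_of_nonneg_left (mul_le_mul_of_nonneg_left h2 hα0)
              (pow_nonneg hlam0.le d)
        _ ≤ lam ^ d * (alpha (j:ℕ) * (lam ^ d * ν (h j) ^ d)) := by
            have hj0 := (hpos j ν).le
            apply mul_le_mul_of_nonneg_left (mul_le_mul_of_nonneg_right hmono _)
              (pow_nonneg hlam0.le d)
            positivity
        _ = (lam ^ 2 * alpha (j:ℕ) ^ ((1:ℝ)/(d:ℝ)) * ν (h j)) ^ d := by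
            rw [mul_pow, mul_pow, hrz, ← pow_mul]
            ring
    have hrhs0 : 0 ≤ lam ^ 2 * alpha (j:ℕ) ^ ((1:ℝ)/(d:ℝ)) * ν (h j) := by
      have h1 := (hpos j ν).le
      have h2 : (0:ℝ) ≤ alpha (j:ℕ) := le_trans zero_le_one (halpha1 _)
      positivity
    exact le_of_pow_le_pow_left₀ (ne_of_gt hd1) hrhs0 hchain
  -- diagonal bounds
  have part1 : ∀ (j : Fin n) (ν : K →+* ℝ),
      ν (h j) ≤ ν (h j + ∑ i ∈ Finset.Iio j, h i * u i j ^ 2) ∧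
      ν (h j + ∑ i ∈ Finset.Iio j, h i * u i j ^ 2) ≤
        (1 + beta ^ 2 * lam ^ 2 * alpha (j : ℕ) ^ ((1 : ℝ) / (d : ℝ)) * (j : ℕ)) * ν (h j) := by
    intro j ν
    have hsum : ν (h j + ∑ i ∈ Finset.Iio j, h i * u i j ^ 2)
        = ν (h j) + ∑ i ∈ Finset.Iio j, ν (h i) * ν (u i j) ^ 2 := by
      rw [map_add, map_sum]
      congr 1
      exact Finset.sum_congr rfl fun i _ => by rw [map_mul, map_pow]
    constructor
    · rw [hsum]
      have : 0 ≤ ∑ i ∈ Finset.Iio j, ν (h i) * ν (u i j) ^ 2 :=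
        Finset.sum_nonneg fun i _ => mul_nonneg (hpos i ν).le (sq_nonneg _)
      linarith
    · rw [hsum]
      have hterm : ∀ i ∈ Finset.Iio j, ν (h i) * ν (u i j) ^ 2 ≤
          beta ^ 2 * lam ^ 2 * alpha (j:ℕ) ^ ((1:ℝ)/(d:ℝ)) * ν (h j) := by
        intro i hi
        have hij : i < j := Finset.mem_Iio.mp hi
        have h1 := key i j hij ν
        have h2 : ν (u i j) ^ 2 ≤ beta ^ 2 := by
          have := hinner i j hij ν
          calc ν (u i j) ^ 2 = |ν (u i j)| ^ 2 := (sq_abs _).symm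
            _ ≤ beta ^ 2 := by
              apply pow_le_pow_left₀ (abs_nonneg _) this
        calc ν (h i) * ν (u i j) ^ 2
            ≤ (lam ^ 2 * alpha (j:ℕ) ^ ((1:ℝ)/(d:ℝ)) * ν (h j)) * beta ^ 2 :=
              mul_le_mul h1 h2 (sq_nonneg _) (by
                have := (hpos j ν).le
                have := le_trans zero_le_one (halpha1 (j:ℕ))
                positivity)
          _ = beta ^ 2 * lam ^ 2 * alpha (j:ℕ) ^ ((1:ℝ)/(d:ℝ)) * ν (h j) := by ring
      have hsumle : ∑ i ∈ Finset.Iio j, ν (h i) * ν (u i j) ^ 2 ≤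
          (j : ℕ) * (beta ^ 2 * lam ^ 2 * alpha (j:ℕ) ^ ((1:ℝ)/(d:ℝ)) * ν (h j)) := by
        calc ∑ i ∈ Finset.Iio j, ν (h i) * ν (u i j) ^ 2
            ≤ ∑ _i ∈ Finset.Iio j, beta ^ 2 * lam ^ 2 * alpha (j:ℕ) ^ ((1:ℝ)/(d:ℝ)) * ν (h j) :=
              Finset.sum_le_sum hterm
          _ = (j : ℕ) * (beta ^ 2 * lam ^ 2 * alpha (j:ℕ) ^ ((1:ℝ)/(d:ℝ)) * ν (h j)) := by
              rw [Finset.sum_const, Fin.card_Iio, nsmul_eq_mul]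
      nlinarith [hpos j ν]
  refine ⟨part1, fun ν => ?_⟩
  constructor
  · rw [map_prod]
    exact Finset.prod_le_prod (fun j _ => (hpos j ν).le) (fun j _ => (part1 j ν).1)
  · rw [map_prod, ← Finset.prod_mul_distrib]
    apply Finset.prod_le_prod
    · intro j _
      exact le_trans (hpos j ν).le (part1 j ν).1
    · intro j _
      exact (part1 j ν).2
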